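/- In the quadratic-coefficient recursion for complete quotients of a quadratic irrational, the coefficients Aᵢ are bounded: for all i ≥ 1, |Aᵢ| < 2|A₀x₀| + |A₀| + |B₀|. -/

import Mathlib

/-- Numerators of convergents (shifted by 2: `cbP a (i+2)` is `pᵢ`). -/
def cbP (a : ℕ → ℤ) : ℕ → ℤ
  | 0 => 0
  | 1 => 1
  | (n + 2) => a n * cbP a (n + 1) + cbP a n

/-- Denominators of convergents (shifted by 2: `cbQ a (i+2)` is `qᵢ`). -/
def cbQ (a : ℕ → ℤ) : ℕ → ℤ
  | 0 => 1
  | 1 => 0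
  | (n + 2) => a n * cbQ a (n + 1) + cbQ a n

/-- Khinchin's bound: in the quadratic-coefficient recursion for the complete
quotients of a quadratic irrational, for all i ≥ 1, |Aᵢ| < 2|A₀x₀| + |A₀| + |B₀|. -/
theorem coefficient_bound
    (x : ℕ → ℝ) (a A B C : ℕ → ℤ)
    (hirr : Irrational (x 0))
    (hA0 : A 0 ≠ 0)
    (ha : ∀ i, a i = ⌊x i⌋)
    (hx : ∀ i, x (i + 1) = (x i - (a i : ℝ))⁻¹)
    (hA : ∀ i, A (i + 1) = A i * (a i) ^ 2 + B i * a i + C i)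
    (hB : ∀ i, B (i + 1) = B i + 2 * A i * a i)
    (hC : ∀ i, C (i + 1) = A i)
    (hroot : (A 0 : ℝ) * (x 0) ^ 2 + (B 0 : ℝ) * x 0 + (C 0 : ℝ) = 0) :
    ∀ i : ℕ, 1 ≤ i →
      (|(A i : ℝ)| < 2 * |(A 0 : ℝ) * x 0| + |(A 0 : ℝ)| + |(B 0 : ℝ)|) := by
  set P := cbP a with hP
  set Q := cbQ a with hQdef
  -- all complete quotients exist and are irrational
  have hfrac : ∀ i, Irrational (x i) → 0 < x i - (a i : ℝ) ∧ x i - (a i : ℝ) < 1 := by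
    intro i hi
    rw [ha i]
    constructor
    · have h1 : (⌊x i⌋ : ℝ) ≤ x i := Int.floor_le _
      have h2 : x i ≠ (⌊x i⌋ : ℝ) := hi.ne_int _
      have := lt_of_le_of_ne h1 (Ne.symm h2)
      linarith
    · have := Int.lt_floor_add_one (x i)
      linarith
  have hxi : ∀ i, Irrational (x i) := by
    intro i
    induction i with
    | zero => exact hirr
    | succ n ih =>
      rw [hx n]
      exact ((ih.sub_intCast (a n))).inv
  have hxgt : ∀ i, 1 < x (i + 1) := by
    intro i
    rw [hx i]
    obtain ⟨h0, h1⟩ := hfrac i (hxi i)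
    exact one_lt_inv_iff₀.mpr ⟨h0, h1⟩
  have hane : ∀ i, x i - (a i : ℝ) ≠ 0 := fun i => ne_of_gt (hfrac i (hxi i)).1
  have hmul : ∀ i, x i * x (i + 1) = (a i : ℝ) * x (i + 1) + 1 := by
    intro i
    rw [hx i]
    linear_combination inv_mul_cancel₀ (hane i)
  -- a i ≥ 1 for i ≥ 1
  have haone : ∀ i, 1 ≤ a (i + 1) := by
    intro i
    rw [ha (i + 1)]
    exact Int.le_floor.mpr (by exact_mod_cast (hxgt i).le)
  -- the coefficient identity
  have hcoef : ∀ i,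
      A i = A 0 * P (i+1) ^ 2 + B 0 * P (i+1) * Q (i+1) + C 0 * Q (i+1) ^ 2
      ∧ B i = 2 * A 0 * P (i+1) * P i + B 0 * (P (i+1) * Q i + P i * Q (i+1))
          + 2 * C 0 * Q (i+1) * Q i
      ∧ C i = A 0 * P i ^ 2 + B 0 * P i * Q i + C 0 * Q i ^ 2 := by
    intro i
    induction i with
    | zero => simp [hP, hQdef, cbP, cbQ]
    | succ n ih =>
      obtain ⟨h1, h2, h3⟩ := ih
      have eP : P (n + 2) = a n * P (n + 1) + P n := rfl
      have eQ : Q (n + 2) = a n * Q (n + 1) + Q n := rfl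
      refine ⟨?_, ?_, ?_⟩
      · rw [hA n, h1, h2, h3, eP, eQ]; ring
      · rw [hB n, h1, h2, eP, eQ]; ring
      · rw [hC n, h1]
  -- the mediant identity for x 0
  have hmed : ∀ i, x 0 * ((Q (i+1) : ℝ) * x i + (Q i : ℝ))
      = (P (i+1) : ℝ) * x i + (P i : ℝ) := by
    intro i
    induction i with
    | zero => simp [hP, hQdef, cbP, cbQ]
    | succ n ih =>
      have eP : (P (n + 2) : ℝ) = (a n : ℝ) * P (n + 1) + P n := by
        rw [hP]; push_cast [cbP]; ring
      have eQ : (Q (n + 2) : ℝ) = (a n : ℝ) * Q (n + 1) + Q n := by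
        rw [hQdef]; push_cast [cbQ]; ring
      rw [eP, eQ]
      linear_combination x (n + 1) * ih - (x 0 * (Q (n+1) : ℝ) - (P (n+1) : ℝ)) * hmul n
  -- the determinant identity
  have hdet : ∀ i, P (i+1) * Q i - P i * Q (i+1) = (-1 : ℤ) ^ i := by
    intro i
    induction i with
    | zero => simp [hP, hQdef, cbP, cbQ]
    | succ n ih =>
      have eP : P (n + 2) = a n * P (n + 1) + P n := rfl
      have eQ : Q (n + 2) = a n * Q (n + 1) + Q n := rfl
      rw [eP, eQ, pow_succ]
      linear_combination (-1 : ℤ) * ih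
  -- positivity of denominators
  have hQpos : ∀ i, 1 ≤ Q (i + 2) ∧ 0 ≤ Q (i + 1) := by
    intro i
    induction i with
    | zero => simp [hQdef, cbQ]
    | succ n ih =>
      obtain ⟨h1, h2⟩ := ih
      have eQ : Q (n + 3) = a (n + 1) * Q (n + 2) + Q (n + 1) := rfl
      refine ⟨?_, by linarith⟩
      rw [eQ]
      nlinarith [haone n]
  -- main argument
  rintro i hi
  obtain ⟨j, rfl⟩ : ∃ j, i = j + 1 := ⟨i - 1, by omega⟩
  -- abbreviations (real-valued)
  set p : ℝ := (P (j + 2) : ℝ) with hp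
  set q : ℝ := (Q (j + 2) : ℝ) with hq
  set p' : ℝ := (P (j + 1) : ℝ) with hp'
  set q' : ℝ := (Q (j + 1) : ℝ) with hq'
  set x' : ℝ := x (j + 1) with hx'
  have hq1 : (1 : ℝ) ≤ q := by rw [hq]; exact_mod_cast (hQpos j).1
  have hq'0 : (0 : ℝ) ≤ q' := by rw [hq']; exact_mod_cast (hQpos j).2
  have hx1 : 1 < x' := hxgt j
  have hden : q < q * x' + q' := by nlinarith
  have hdenpos : (0 : ℝ) < q * x' + q' := by linarith
  set e : ℝ := p - q * x 0 with he
  -- e * (q x' + q') = ± 1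
  have hkey : e * (q * x' + q') = p * q' - q * p' := by
    have h := hmed (j + 1)
    rw [← hq', ← hp', ← hq, ← hp, ← hx'] at h
    linear_combination (-q) * h
  have hdet' : |p * q' - q * p'| = 1 := by
    have h := hdet (j + 1)
    have h2 : ((P (j + 2) : ℝ)) * Q (j + 1) - (P (j + 1) : ℝ) * Q (j + 2)
        = (-1 : ℝ) ^ (j + 1) := by exact_mod_cast congrArg (fun z : ℤ => (z : ℝ)) h
    have h3 : p * q' - q * p' = (-1 : ℝ) ^ (j + 1) := by
      rw [hp, hq, hp', hq']
      linear_combination h2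
    rw [h3, abs_pow, abs_neg, abs_one, one_pow]
  have heabs : |e| * (q * x' + q') = 1 := by
    rw [← abs_of_pos hdenpos, ← abs_mul, hkey, hdet']
  have he1 : |e| < 1 := by nlinarith [abs_nonneg e]
  have hqe1 : q * |e| < 1 := by nlinarith [abs_nonneg e]
  -- A (j+1) in terms of e
  have hAe : (A (j + 1) : ℝ) = e * ((A 0 : ℝ) * e + (2 * (A 0 : ℝ) * x 0 + (B 0 : ℝ)) * q) := by
    have h := (hcoef (j + 1)).1
    have h' : (A (j + 1) : ℝ) = (A 0 : ℝ) * p ^ 2 + (B 0 : ℝ) * p * q + (C 0 : ℝ) * q ^ 2 := by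
      rw [hp, hq]
      exact_mod_cast congrArg (fun z : ℤ => (z : ℝ)) h
    rw [h', he]
    linear_combination q ^ 2 * hroot
  -- final estimate
  have hA0pos : (0 : ℝ) < |(A 0 : ℝ)| := by
    simp only [abs_pos]
    exact_mod_cast hA0
  have htri : |(A (j + 1) : ℝ)| ≤ |(A 0 : ℝ)| * |e| ^ 2 + |2 * (A 0 : ℝ) * x 0 + (B 0 : ℝ)| * (q * |e|) := by
    rw [hAe, abs_mul]
    have : |(A 0 : ℝ) * e + (2 * (A 0 : ℝ) * x 0 + (B 0 : ℝ)) * q|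
        ≤ |(A 0 : ℝ)| * |e| + |2 * (A 0 : ℝ) * x 0 + (B 0 : ℝ)| * q := by
      calc _ ≤ |(A 0 : ℝ) * e| + |(2 * (A 0 : ℝ) * x 0 + (B 0 : ℝ)) * q| := abs_add_le _ _
        _ = |(A 0 : ℝ)| * |e| + |2 * (A 0 : ℝ) * x 0 + (B 0 : ℝ)| * q := by
            rw [abs_mul, abs_mul, abs_of_pos (by linarith : (0:ℝ) < q)]
      
    nlinarith [abs_nonneg e, abs_nonneg ((A 0 : ℝ) * e + (2 * (A 0 : ℝ) * x 0 + (B 0 : ℝ)) * q)]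
  have h2 : |2 * (A 0 : ℝ) * x 0 + (B 0 : ℝ)| ≤ 2 * |(A 0 : ℝ) * x 0| + |(B 0 : ℝ)| := by
    calc |2 * (A 0 : ℝ) * x 0 + (B 0 : ℝ)| ≤ |2 * (A 0 : ℝ) * x 0| + |(B 0 : ℝ)| := abs_add_le _ _
      _ = 2 * |(A 0 : ℝ) * x 0| + |(B 0 : ℝ)| := by rw [mul_assoc, abs_mul]; simp
  have habs0 : (0:ℝ) ≤ |2 * (A 0 : ℝ) * x 0 + (B 0 : ℝ)| := abs_nonneg _
  nlinarith [abs_nonneg e, mul_nonneg (le_of_lt hA0pos) (abs_nonneg e)]
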